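/- Let A be a ternary Jordan algebra over a field F. Then A is indecomposable (A cannot be written as A = A₁ ⊕ A₂ with A₁, A₂ nonzero ideals, A₁ ∩ A₂ = {0}, A₁ + A₂ = A) if and only if the centroid Γ(A) contains no idempotents except 0 and the identity map (i.e. ψ ∈ Γ(A) with ψ∘ψ = ψ implies ψ = 0 or ψ = id). -/

import Mathlib

/-- A ternary Jordan algebra structure: a totally symmetric trilinear multiplication
`t` on a vector space such that every commutator of right multiplication operators
is a derivation. -/
structure IsTernaryJordan (F : Type*) [Field F] {A : Type*} [AddCommGroup A]
    [Module F A] (t : A → A → A → A) : Prop where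
  add_left : ∀ x y z w : A, t (x + y) z w = t x z w + t y z w
  smul_left : ∀ (c : F) (x y z : A), t (c • x) y z = c • t x y z
  symm12 : ∀ x y z : A, t x y z = t y x z
  symm23 : ∀ x y z : A, t x y z = t x z y
  comm_der : ∀ x₂ x₃ y₂ y₃ a b c : A,
    t (t (t a b c) x₂ x₃) y₂ y₃ - t (t (t a b c) y₂ y₃) x₂ x₃ =
      t (t (t a x₂ x₃) y₂ y₃ - t (t a y₂ y₃) x₂ x₃) b c +
        t a (t (t b x₂ x₃) y₂ y₃ - t (t b y₂ y₃) x₂ x₃) c +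
          t a b (t (t c x₂ x₃) y₂ y₃ - t (t c y₂ y₃) x₂ x₃)
/-- Membership in the centroid of the ternary algebra `(A, t)`. -/
def IsCent (F : Type*) [Field F] {A : Type*} [AddCommGroup A] [Module F A]
    (t : A → A → A → A) (f : A →ₗ[F] A) : Prop :=
  ∀ x y z : A, t (f x) y z = t x (f y) z ∧ t x (f y) z = t x y (f z) ∧
    t x y (f z) = f (t x y z)

section Aux

variable {F : Type*} [Field F] {A : Type*} [AddCommGroup A] [Module F A]
  {t : A → A → A → A}

lemma tjz (ht : IsTernaryJordan F t) (y z : A) : t 0 y z = 0 := by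
  have h := ht.smul_left (0 : F) 0 y z
  simpa using h

lemma tadd2 (ht : IsTernaryJordan F t) (x y y' z : A) :
    t x (y + y') z = t x y z + t x y' z := by
  rw [ht.symm12 x (y + y') z, ht.add_left, ht.symm12 y x z, ht.symm12 y' x z]

lemma tadd3 (ht : IsTernaryJordan F t) (x y z z' : A) :
    t x y (z + z') = t x y z + t x y z' := by
  rw [ht.symm23 x y (z + z'), tadd2 ht, ht.symm23 x z y, ht.symm23 x z' y]

lemma tsymm13 (ht : IsTernaryJordan F t) (x y z : A) : t x y z = t z y x := by
  rw [ht.symm23, ht.symm12, ht.symm23]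

end Aux

/-- `A` is indecomposable iff the only idempotents in its centroid are
`0` and the identity. -/
theorem stmt18 {F : Type*} [Field F] {A : Type*} [AddCommGroup A] [Module F A]
    (t : A → A → A → A) (ht : IsTernaryJordan F t) :
    (¬ ∃ A₁ A₂ : Submodule F A, A₁ ≠ ⊥ ∧ A₂ ≠ ⊥ ∧
        (∀ a ∈ A₁, ∀ x y : A, t a x y ∈ A₁) ∧
        (∀ a ∈ A₂, ∀ x y : A, t a x y ∈ A₂) ∧
        A₁ ⊓ A₂ = ⊥ ∧ A₁ ⊔ A₂ = ⊤) ↔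
      ∀ ψ : A →ₗ[F] A, IsCent F t ψ → ψ ∘ₗ ψ = ψ →
        ψ = 0 ∨ ψ = LinearMap.id := by
  constructor
  · -- indecomposable → no nontrivial idempotents
    intro hInd ψ hcent hidem
    have hid : ∀ x, ψ (ψ x) = ψ x := by
      intro x
      have := DFunLike.congr_fun hidem x
      simpa using this
    -- the chained centroid identity
    have hch : ∀ a x y : A, t (ψ a) x y = ψ (t a x y) := fun a x y =>
      (hcent a x y).1.trans ((hcent a x y).2.1.trans (hcent a x y).2.2)
    by_contra hcon
    push_neg at hcon
    obtain ⟨hne0, hneid⟩ := hcon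
    apply hInd
    refine ⟨LinearMap.range ψ, LinearMap.ker ψ, ?_, ?_, ?_, ?_, ?_, ?_⟩
    · -- range ≠ ⊥
      intro h
      apply hne0
      ext x
      have hx : ψ x ∈ LinearMap.range ψ := LinearMap.mem_range_self ψ x
      rw [h, Submodule.mem_bot] at hx
      simpa using hx
    · -- ker ≠ ⊥
      intro h
      apply hneid
      ext x
      have hx : x - ψ x ∈ LinearMap.ker ψ := by
        rw [LinearMap.mem_ker, map_sub, hid, sub_self]
      rw [h, Submodule.mem_bot, sub_eq_zero] at hx
      simpa using hx.symm
    · rintro a ⟨b, rfl⟩ x y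
      exact ⟨t b x y, (hch b x y).symm⟩
    · intro a ha x y
      rw [LinearMap.mem_ker] at ha ⊢
      rw [← hch, ha, tjz ht]
    · -- range ⊓ ker = ⊥
      rw [eq_bot_iff]
      rintro x ⟨⟨b, rfl⟩, hx2⟩
      rw [SetLike.mem_coe, LinearMap.mem_ker] at hx2
      rw [Submodule.mem_bot, ← hid b, hx2]
    · -- range ⊔ ker = ⊤
      rw [eq_top_iff]
      intro x _
      have : x = ψ x + (x - ψ x) := by abel
      rw [this]
      exact Submodule.add_mem_sup (LinearMap.mem_range_self ψ x)
        (by rw [LinearMap.mem_ker, map_sub, hid, sub_self])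
  · -- no nontrivial idempotents → indecomposable
    intro hψ
    rintro ⟨A₁, A₂, h1, h2, h3, h4, h5, h6⟩
    have hc : IsCompl A₁ A₂ := ⟨disjoint_iff.mpr h5, codisjoint_iff.mpr h6⟩
    set ψ : A →ₗ[F] A := A₁.subtype ∘ₗ Submodule.linearProjOfIsCompl A₁ A₂ hc with hψdef
    have hψ1 : ∀ x (hx : x ∈ A₁), ψ x = x := by
      intro x hx
      have h := Submodule.linearProjOfIsCompl_apply_left hc (⟨x, hx⟩ : A₁)
      have : ψ x = ((Submodule.projectionOnto A₁ A₂ hc x : A₁) : A) := rfl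
      rw [this, show Submodule.projectionOnto A₁ A₂ hc x
        = Submodule.projectionOnto A₁ A₂ hc ((⟨x, hx⟩ : A₁) : A) from rfl, h]
    have hψ2 : ∀ x (hx : x ∈ A₂), ψ x = 0 := by
      intro x hx
      have h := Submodule.projectionOnto_apply_of_mem_right hc hx
      have : ψ x = ((Submodule.projectionOnto A₁ A₂ hc x : A₁) : A) := rfl
      rw [this, h]
      rfl
    have hmemψ : ∀ x, ψ x ∈ A₁ := fun x => (Submodule.linearProjOfIsCompl A₁ A₂ hc x).2
    -- mixed products vanish
    have hz12 : ∀ a ∈ A₁, ∀ b ∈ A₂, ∀ c : A, t a b c = 0 := by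
      intro a ha b hb c
      have m1 : t a b c ∈ A₁ := h3 a ha b c
      have m2 : t a b c ∈ A₂ := by rw [ht.symm12]; exact h4 b hb a c
      have : t a b c ∈ A₁ ⊓ A₂ := ⟨m1, m2⟩
      rwa [h5, Submodule.mem_bot] at this
    have hz13 : ∀ a ∈ A₁, ∀ c ∈ A₂, ∀ b : A, t a b c = 0 := by
      intro a ha c hc' b
      rw [ht.symm23]; exact hz12 a ha c hc' b
    have hz23 : ∀ b ∈ A₁, ∀ c ∈ A₂, ∀ a : A, t a b c = 0 := by
      intro b hb c hc' a
      rw [ht.symm12]; exact hz13 b hb c hc' a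
    -- expansion lemma
    have hexp : ∀ a₁ ∈ A₁, ∀ a₂ ∈ A₂, ∀ b₁ ∈ A₁, ∀ b₂ ∈ A₂, ∀ c₁ ∈ A₁, ∀ c₂ ∈ A₂,
        t (a₁ + a₂) (b₁ + b₂) (c₁ + c₂) = t a₁ b₁ c₁ + t a₂ b₂ c₂ := by
      intro a₁ ha₁ a₂ ha₂ b₁ hb₁ b₂ hb₂ c₁ hc₁ c₂ hc₂
      rw [ht.add_left, tadd2 ht, tadd2 ht, tadd3 ht, tadd3 ht, tadd3 ht, tadd3 ht]
      rw [hz13 a₁ ha₁ c₂ hc₂ b₁, hz12 a₁ ha₁ b₂ hb₂ c₁, hz12 a₁ ha₁ b₂ hb₂ c₂,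
        hz23 b₁ hb₁ c₂ hc₂ a₂]
      rw [show t a₂ b₁ c₁ = 0 from by rw [ht.symm12]; exact hz12 b₁ hb₁ a₂ ha₂ c₁]
      rw [show t a₂ b₂ c₁ = 0 from by rw [tsymm13 ht]; exact hz12 c₁ hc₁ b₂ hb₂ a₂]
      abel
    have hdecomp : ∀ x : A, ∃ x₁ ∈ A₁, ∃ x₂ ∈ A₂, x = x₁ + x₂ := by
      intro x
      have hx : x ∈ A₁ ⊔ A₂ := by rw [h6]; trivial
      obtain ⟨x₁, hx₁, x₂, hx₂, hsum⟩ := Submodule.mem_sup.mp hx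
      exact ⟨x₁, hx₁, x₂, hx₂, hsum.symm⟩
    have hcent : IsCent F t ψ := by
      intro x y z
      obtain ⟨x₁, hx₁, x₂, hx₂, rfl⟩ := hdecomp x
      obtain ⟨y₁, hy₁, y₂, hy₂, rfl⟩ := hdecomp y
      obtain ⟨z₁, hz₁, z₂, hz₂, rfl⟩ := hdecomp z
      have hψx : ψ (x₁ + x₂) = x₁ := by
        rw [map_add, hψ1 x₁ hx₁, hψ2 x₂ hx₂, add_zero]
      have hψy : ψ (y₁ + y₂) = y₁ := by
        rw [map_add, hψ1 y₁ hy₁, hψ2 y₂ hy₂, add_zero]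
      have hψz : ψ (z₁ + z₂) = z₁ := by
        rw [map_add, hψ1 z₁ hz₁, hψ2 z₂ hz₂, add_zero]
      have e1 : t (ψ (x₁ + x₂)) (y₁ + y₂) (z₁ + z₂) = t x₁ y₁ z₁ := by
        rw [hψx]
        have := hexp x₁ hx₁ 0 (Submodule.zero_mem A₂) y₁ hy₁ y₂ hy₂ z₁ hz₁ z₂ hz₂
        rw [add_zero] at this
        rw [this, tjz ht, add_zero]
      have e2 : t (x₁ + x₂) (ψ (y₁ + y₂)) (z₁ + z₂) = t x₁ y₁ z₁ := by
        rw [hψy]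
        have := hexp x₁ hx₁ x₂ hx₂ y₁ hy₁ 0 (Submodule.zero_mem A₂) z₁ hz₁ z₂ hz₂
        rw [add_zero] at this
        rw [this]
        rw [show t x₂ (0:A) z₂ = 0 from by rw [ht.symm12]; exact tjz ht x₂ z₂, add_zero]
      have e3 : t (x₁ + x₂) (y₁ + y₂) (ψ (z₁ + z₂)) = t x₁ y₁ z₁ := by
        rw [hψz]
        have := hexp x₁ hx₁ x₂ hx₂ y₁ hy₁ y₂ hy₂ z₁ hz₁ 0 (Submodule.zero_mem A₂)
        rw [add_zero] at this
        rw [this]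
        rw [show t x₂ y₂ (0:A) = 0 from by rw [tsymm13 ht]; exact tjz ht y₂ x₂, add_zero]
      have e4 : ψ (t (x₁ + x₂) (y₁ + y₂) (z₁ + z₂)) = t x₁ y₁ z₁ := by
        rw [hexp x₁ hx₁ x₂ hx₂ y₁ hy₁ y₂ hy₂ z₁ hz₁ z₂ hz₂, map_add,
          hψ1 _ (h3 x₁ hx₁ y₁ z₁), hψ2 _ (h4 x₂ hx₂ y₂ z₂), add_zero]
      exact ⟨e1.trans e2.symm, e2.trans e3.symm, e3.trans e4.symm⟩
    have hidem : ψ ∘ₗ ψ = ψ := by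
      ext x
      exact hψ1 (ψ x) (hmemψ x)
    obtain ⟨a, ha, hane⟩ := Submodule.exists_mem_ne_zero_of_ne_bot h1
    obtain ⟨b, hb, hbne⟩ := Submodule.exists_mem_ne_zero_of_ne_bot h2
    rcases hψ ψ hcent hidem with h0 | hId
    · apply hane
      have := hψ1 a ha
      rw [h0] at this
      simpa using this.symm
    · apply hbne
      have := hψ2 b hb
      rw [hId] at this
      simpa using this
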